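/- Fix positive integers m, d, K. Define the function g_k : ℕ → ℝ by g_k(n) = 1/n^d if k divides n and g_k(n) = 0 otherwise. Then for every positive integer n, |δ_m(n) − m^d · Σ_{k=1}^{K} μ(k)·g_{km}(n)| ≤ 1/K, where δ_m(n) = 1 if n = m and 0 otherwise, and μ is the Möbius function. -/

import Mathlib

open Finset ArithmeticFunction

lemma moebius_divisor_sum' (q : ℕ) :
    ∑ k ∈ q.divisors, (ArithmeticFunction.moebius k : ℤ) = if q = 1 then 1 else 0 := by
  have h : (ArithmeticFunction.moebius * (ArithmeticFunction.zeta : ArithmeticFunction ℤ) : ArithmeticFunction ℤ) q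
      = (1 : ArithmeticFunction ℤ) q := by
    rw [ArithmeticFunction.moebius_mul_coe_zeta]
  rwa [ArithmeticFunction.coe_mul_zeta_apply, ArithmeticFunction.one_apply] at h

theorem moebius_delta_approx (m d K : ℕ) (hm : 0 < m) (hd : 0 < d) (hK : 0 < K)
    (n : ℕ) (hn : 0 < n) :
    |(if n = m then (1 : ℝ) else 0)
        - (m : ℝ) ^ d * ∑ k ∈ Finset.Icc 1 K, (ArithmeticFunction.moebius k : ℝ) *
            (if k * m ∣ n then 1 / (n : ℝ) ^ d else 0)| ≤ 1 / K := by
  have hKR : (0:ℝ) < K := by exact_mod_cast hK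
  by_cases hmn : m ∣ n
  swap
  · have h1 : n ≠ m := fun h => hmn (h ▸ dvd_refl m)
    rw [if_neg h1, Finset.sum_eq_zero (fun k _ => by
      rw [if_neg (fun h => hmn (dvd_trans (Dvd.intro_left k rfl) h)), mul_zero])]
    simpa using le_of_lt (by positivity : (0:ℝ) < 1 / K)
  · obtain ⟨q, rfl⟩ := hmn
    have hq : 0 < q := Nat.pos_of_ne_zero (fun h => by simp [h] at hn)
    have hcond : ∀ k, (k * m ∣ m * q ↔ k ∣ q) := by
      intro k; rw [mul_comm k m]; exact mul_dvd_mul_iff_left hm.ne'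
    set S : ℝ := ∑ k ∈ (Finset.Icc 1 K).filter (· ∣ q), (moebius k : ℝ) with hS
    have hqd : (0:ℝ) < (q:ℝ)^d := by positivity
    have hsum : (m : ℝ)^d * ∑ k ∈ Finset.Icc 1 K, (moebius k : ℝ) *
        (if k * m ∣ m * q then 1 / ((m*q : ℕ) : ℝ)^d else 0) = S / (q:ℝ)^d := by
      rw [hS, Finset.sum_filter, Finset.mul_sum, Finset.sum_div]
      refine Finset.sum_congr rfl fun k _ => ?_
      by_cases h : k ∣ q
      · rw [if_pos ((hcond k).mpr h), if_pos h]
        have hm0 : ((m:ℝ))^d ≠ 0 := by positivity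
        have hq0 : ((q:ℝ))^d ≠ 0 := by positivity
        push_cast
        rw [mul_pow]
        field_simp
      · rw [if_neg (fun hh => h ((hcond k).mp hh)), if_neg h, mul_zero, mul_zero, zero_div]
    rw [hsum]
    rcases eq_or_lt_of_le (Nat.one_le_iff_ne_zero.mpr hq.ne') with hq1 | hq1
    · -- q = 1
      have hq1' : q = 1 := hq1.symm
      subst hq1'
      have hfil : (Finset.Icc 1 K).filter (· ∣ 1) = {1} := by
        ext k
        simp only [Finset.mem_filter, Finset.mem_Icc, Nat.dvd_one, Finset.mem_singleton]
        omega
      have : S = 1 := by rw [hS, hfil]; simp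
      rw [this]
      simp
    · -- q > 1
      have hne : m * q ≠ m := by
        intro h
        have : q = 1 := Nat.eq_of_mul_eq_mul_left hm (by omega)
        omega
      rw [if_neg hne, zero_sub, abs_neg, abs_div, abs_of_pos hqd]
      rcases le_or_gt q K with hqK | hqK
      · -- q ≤ K : S = 0
        have hfil : (Finset.Icc 1 K).filter (· ∣ q) = q.divisors := by
          ext k
          simp only [Finset.mem_filter, Finset.mem_Icc, Nat.mem_divisors, hq.ne',
            ne_eq, not_false_iff, and_true]
          constructor
          · exact fun h => h.2
          · exact fun h => ⟨⟨Nat.pos_of_dvd_of_pos h hq, le_trans (Nat.le_of_dvd hq h) hqK⟩, h⟩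
        have : S = 0 := by
          rw [hS, hfil]
          have := moebius_divisor_sum' q
          rw [if_neg (by omega)] at this
          exact_mod_cast congrArg (fun x : ℤ => (x : ℝ)) this
        rw [this]
        simp
      · -- q > K
        set T := q.divisors.filter (fun k => ¬ k ≤ K) with hT
        have hfil : (Finset.Icc 1 K).filter (· ∣ q) = q.divisors.filter (· ≤ K) := by
          ext k
          simp only [Finset.mem_filter, Finset.mem_Icc, Nat.mem_divisors, hq.ne',
            ne_eq, not_false_iff, and_true]
          constructor
          · exact fun h => ⟨h.2, h.1.2⟩
          · exact fun h => ⟨⟨Nat.pos_of_dvd_of_pos h.1 hq, h.2⟩, h.1⟩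
        have hsplit : S + ∑ k ∈ T, (moebius k : ℝ) = ∑ k ∈ q.divisors, (moebius k : ℝ) := by
          rw [hS, hfil, hT]
          exact Finset.sum_filter_add_sum_filter_not _ _ _
        have hzero : ∑ k ∈ q.divisors, (moebius k : ℝ) = 0 := by
          have := moebius_divisor_sum' q
          rw [if_neg (by omega)] at this
          exact_mod_cast congrArg (fun x : ℤ => (x : ℝ)) this
        have hSeq : S = - ∑ k ∈ T, (moebius k : ℝ) := by linarith [hsplit, hzero]
        have hcard : T.card ≤ q / (K + 1) := by
          have h1 : T.card ≤ (Finset.Icc 1 (q / (K + 1))).card := by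
            apply Finset.card_le_card_of_injOn (fun k => q / k)
            · intro k hk
              simp only [hT, Finset.mem_coe, Finset.mem_filter, Nat.mem_divisors, not_le] at hk
              obtain ⟨⟨hdvd, -⟩, hKk⟩ := hk
              have hk1 : 0 < k := by omega
              simp only [Finset.mem_coe, Finset.mem_Icc]
              refine ⟨(Nat.one_le_div_iff hk1).mpr (Nat.le_of_dvd hq hdvd), ?_⟩
              exact Nat.div_le_div_left (by omega) (by omega)
            · intro k1 hk1 k2 hk2 h
              rw [hT] at hk1 hk2
              simp only [Finset.mem_coe, Finset.mem_filter, Nat.mem_divisors] at hk1 hk2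
              have e1 : q / (q / k1) = k1 := Nat.div_div_self hk1.1.1 hq.ne'
              have e2 : q / (q / k2) = k2 := Nat.div_div_self hk2.1.1 hq.ne'
              rw [← e1, ← e2]
              exact congrArg (fun x => q / x) h
          simpa using h1
        have habs : |∑ k ∈ T, (moebius k : ℝ)| ≤ T.card := by
          calc |∑ k ∈ T, (moebius k : ℝ)| ≤ ∑ k ∈ T, |(moebius k : ℝ)| :=
                Finset.abs_sum_le_sum_abs _ _
            _ ≤ ∑ k ∈ T, 1 := by
                refine Finset.sum_le_sum fun k _ => ?_
                exact_mod_cast ArithmeticFunction.abs_moebius_le_one (n := k)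
            _ = T.card := by simp
        have hSle : |S| ≤ (q / (K + 1) : ℕ) := by
          rw [hSeq, abs_neg]
          exact habs.trans (by exact_mod_cast hcard)
        rw [div_le_div_iff₀ hqd hKR]
        have hkey : ((q / (K + 1) : ℕ) : ℝ) * K ≤ q := by
          have h1 : (q / (K + 1)) * (K + 1) ≤ q := Nat.div_mul_le_self q (K + 1)
          have h2 : (q / (K + 1)) * K ≤ (q / (K + 1)) * (K + 1) := by
            exact Nat.mul_le_mul_left _ (by omega)
          exact_mod_cast le_trans h2 h1
        have hqqd : (q : ℝ) ≤ (q:ℝ)^d := by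
          exact le_self_pow₀ (by exact_mod_cast hq) hd.ne'
        calc |S| * (K:ℝ) ≤ ((q / (K + 1) : ℕ) : ℝ) * K := by
              exact mul_le_mul_of_nonneg_right hSle (le_of_lt hKR)
          _ ≤ (q:ℝ) := hkey
          _ ≤ (q:ℝ)^d := hqqd
          _ = 1 * (q:ℝ)^d := by ring
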